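/- arXiv:1003.3621 — 3 statements merged into one kernel-verified Lean document; each statement's English description precedes it below -/
import Mathlib

section
/- Let N ≥ 2, ω = exp(2πi/N), and let k be an integer with 0 ≤ k ≤ N-1. Then ∑_{j=1}^{N-1} ω^{kj}/(1 - ω^{-j}) = (N - 1 - 2k)/2. -/
lemma sum_omega_aux1 (z : ℂ) (hz0 : z ≠ 0) (hz1 : z ≠ 1) :
    1 / (1 - z⁻¹) + 1 / (1 - z) = 1 := by
  have h1 : 1 - z⁻¹ = (z - 1) / z := by field_simp
  have hzm : z - 1 ≠ 0 := sub_ne_zero_of_ne hz1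
  have hzm' : 1 - z ≠ 0 := sub_ne_zero_of_ne (Ne.symm hz1)
  rw [h1]
  field_simp
  ring

lemma sum_omega_aux2 (x z : ℂ) (hz0 : z ≠ 0) (hz1 : z ≠ 1) :
    x * z / (1 - z⁻¹) = x / (1 - z⁻¹) + x * z := by
  have h1 : 1 - z⁻¹ = (z - 1) / z := by field_simp
  have hzm : z - 1 ≠ 0 := sub_ne_zero_of_ne hz1
  rw [h1]
  field_simp
  ring

/-- `∑_{j=1}^{N-1} ω^{kj}/(1 - ω^{-j}) = (N-1-2k)/2` for `0 ≤ k ≤ N-1`. -/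
theorem sum_omega_pow_div (N : ℕ) (hN : 2 ≤ N)
    (ω : ℂ) (hω : ω = Complex.exp (2 * Real.pi * Complex.I / N))
    (k : ℕ) (hk : k ≤ N - 1) :
    ∑ j ∈ Finset.Ico 1 N, ω ^ (k * j) / (1 - ω ^ (-(j : ℤ))) =
      ((N : ℂ) - 1 - 2 * k) / 2 := by
  have hprim : IsPrimitiveRoot ω N := by
    rw [hω]; exact Complex.isPrimitiveRoot_exp N (by omega)
  have hωN : ω ^ N = 1 := hprim.pow_eq_one
  have hω0 : ω ≠ 0 := by rw [hω]; exact Complex.exp_ne_zero _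
  have hne : ∀ j, 1 ≤ j → j < N → ω ^ j ≠ 1 := fun j h1 h2 =>
    hprim.pow_ne_one_of_pos_of_lt (by omega) h2
  -- base case k = 0
  have base : ∑ j ∈ Finset.Ico 1 N, (1 : ℂ) / (1 - ω ^ (-(j : ℤ))) = ((N : ℂ) - 1) / 2 := by
    have reindex : ∑ j ∈ Finset.Ico 1 N, (1 : ℂ) / (1 - ω ^ (-((N - j : ℕ) : ℤ)))
        = ∑ j ∈ Finset.Ico 1 N, (1 : ℂ) / (1 - ω ^ (-(j : ℤ))) := by
      apply Finset.sum_nbij' (fun j => N - j) (fun j => N - j)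
      · intro a ha; rw [Finset.mem_Ico] at *; omega
      · intro a ha; rw [Finset.mem_Ico] at *; omega
      · intro a ha; rw [Finset.mem_Ico] at ha; omega
      · intro a ha; rw [Finset.mem_Ico] at ha; omega
      · intro a _; rfl
    have pair : ∀ j ∈ Finset.Ico 1 N,
        (1 : ℂ) / (1 - ω ^ (-(j : ℤ))) + 1 / (1 - ω ^ (-((N - j : ℕ) : ℤ))) = 1 := by
      intro j hj
      rw [Finset.mem_Ico] at hj
      have hz : ω ^ j ≠ 1 := hne j hj.1 hj.2
      have h1 : ω ^ (-((N - j : ℕ) : ℤ)) = ω ^ j := by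
        have e : (-((N - j : ℕ) : ℤ)) = (j : ℤ) - (N : ℤ) := by
          push_cast [Nat.cast_sub hj.2.le]; ring
        rw [e, zpow_sub₀ hω0, zpow_natCast, zpow_natCast, hωN, div_one]
      rw [h1, zpow_neg, zpow_natCast]
      exact sum_omega_aux1 (ω ^ j) (pow_ne_zero _ hω0) hz
    have two_s : (2 : ℂ) * ∑ j ∈ Finset.Ico 1 N, (1 : ℂ) / (1 - ω ^ (-(j : ℤ)))
        = (N : ℂ) - 1 := by
      have h : (∑ j ∈ Finset.Ico 1 N, (1 : ℂ) / (1 - ω ^ (-(j : ℤ))))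
          + ∑ j ∈ Finset.Ico 1 N, (1 : ℂ) / (1 - ω ^ (-((N - j : ℕ) : ℤ)))
          = ∑ j ∈ Finset.Ico 1 N, (1 : ℂ) := by
        rw [← Finset.sum_add_distrib]
        exact Finset.sum_congr rfl pair
      rw [reindex] at h
      have hcard : (∑ j ∈ Finset.Ico 1 N, (1 : ℂ)) = (N : ℂ) - 1 := by
        rw [Finset.sum_const, Nat.card_Ico, nsmul_eq_mul, mul_one,
          Nat.cast_sub (by omega), Nat.cast_one]
      rw [hcard] at h
      linear_combination h
    linear_combination two_s / 2
  -- step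
  have step : ∀ m : ℕ, m + 1 < N →
      ∑ j ∈ Finset.Ico 1 N, ω ^ ((m + 1) * j) / (1 - ω ^ (-(j : ℤ)))
        = (∑ j ∈ Finset.Ico 1 N, ω ^ (m * j) / (1 - ω ^ (-(j : ℤ)))) - 1 := by
    intro m hm
    have hx : ω ^ (m + 1) ≠ 1 := hne (m + 1) (by omega) hm
    have geom : ∑ j ∈ Finset.Ico 1 N, ω ^ ((m + 1) * j) = -1 := by
      have h0 : ∑ j ∈ Finset.range N, (ω ^ (m + 1)) ^ j = 0 := by
        rw [geom_sum_eq hx]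
        have h1 : (ω ^ (m + 1)) ^ N = 1 := by
          rw [← pow_mul, mul_comm, pow_mul, hωN, one_pow]
        rw [h1]; simp
      have h2 : ∑ j ∈ Finset.Ico 1 N, (ω ^ (m + 1)) ^ j
          = ∑ j ∈ Finset.range N, (ω ^ (m + 1)) ^ j - ∑ j ∈ Finset.range 1, (ω ^ (m + 1)) ^ j :=
        Finset.sum_Ico_eq_sub _ (by omega)
      simp only [Finset.sum_range_one, pow_zero, h0, zero_sub] at h2
      calc ∑ j ∈ Finset.Ico 1 N, ω ^ ((m + 1) * j)
          = ∑ j ∈ Finset.Ico 1 N, (ω ^ (m + 1)) ^ j :=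
            Finset.sum_congr rfl fun j _ => by rw [← pow_mul]
        _ = -1 := h2
    have term : ∀ j ∈ Finset.Ico 1 N,
        ω ^ ((m + 1) * j) / (1 - ω ^ (-(j : ℤ)))
          = ω ^ (m * j) / (1 - ω ^ (-(j : ℤ))) + ω ^ ((m + 1) * j) := by
      intro j hj
      rw [Finset.mem_Ico] at hj
      have e : ω ^ ((m + 1) * j) = ω ^ (m * j) * ω ^ j := by
        rw [← pow_add]; ring_nf
      rw [e, zpow_neg, zpow_natCast]
      exact sum_omega_aux2 _ _ (pow_ne_zero _ hω0) (hne j hj.1 hj.2)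
    rw [Finset.sum_congr rfl term, Finset.sum_add_distrib, geom]
    ring
  -- induction
  have main : ∀ m : ℕ, m < N →
      ∑ j ∈ Finset.Ico 1 N, ω ^ (m * j) / (1 - ω ^ (-(j : ℤ))) = ((N : ℂ) - 1) / 2 - m := by
    intro m
    induction m with
    | zero => intro _; simpa using base
    | succ n ih =>
        intro h
        rw [step n h, ih (by omega)]
        push_cast; ring
  rw [main k (by omega)]
  ring
end

section
/- Let N ≥ 2, ω = exp(2πi/N), L ≥ 1, J ≥ 0, m an integer, and let P_a, P_b, P'_a, P'_b be integers with P_a + P_b + P'_a + P'_b ≡ −(L + 2J) (mod N). Let v_1, …, v_J be nonzero complex numbers and v'_j = v_j^{-1} ω^{-3-2m}. Then {v_j} satisfies the Bethe equations ((v_i + ω^{-1-m})/(v_i + ω^{-2-m}))^L = −ω^{−P_a−P_b} ∏_{j=1}^{J} (v_i − ω^{-1} v_j)/(v_i − ω v_j) for all i, if and only if {v'_j} satisfies the same system of equations with (P_a, P_b) replaced by (P'_a, P'_b). -/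
lemma bethe_aux_den (ω a b c : ℂ) (hω0 : ω ≠ 0) (ha : a ≠ 0) (hb : b ≠ 0) :
    a⁻¹ * (ω*c*c) - ω * (b⁻¹ * (ω*c*c)) = -((ω*c*c) * ω * (a*b)⁻¹ * (a - ω⁻¹*b)) := by
  field_simp
  ring

lemma bethe_aux_fac (ω a b c : ℂ) (hω0 : ω ≠ 0) (ha : a ≠ 0) (hb : b ≠ 0) (hc : c ≠ 0)
    (h2 : a - ω⁻¹ * b ≠ 0) :
    (a⁻¹ * (ω*c*c) - ω⁻¹ * (b⁻¹ * (ω*c*c))) / (a⁻¹ * (ω*c*c) - ω * (b⁻¹ * (ω*c*c)))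
      = ω⁻¹ * ω⁻¹ * ((a - ω*b)/(a - ω⁻¹*b)) := by
  have hnum : a⁻¹ * (ω*c*c) - ω⁻¹ * (b⁻¹ * (ω*c*c)) = -((ω*c*c) * ω⁻¹ * (a*b)⁻¹ * (a - ω*b)) := by
    field_simp
    ring
  have hy : -((ω*c*c) * ω * (a*b)⁻¹ * (a - ω⁻¹*b)) ≠ 0 := by
    refine neg_ne_zero.mpr (mul_ne_zero (mul_ne_zero (mul_ne_zero ?_ hω0) ?_) h2)
    · exact mul_ne_zero (mul_ne_zero hω0 hc) hc
    · exact inv_ne_zero (mul_ne_zero ha hb)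
  rw [hnum, bethe_aux_den ω a b c hω0 ha hb, div_eq_iff hy]
  generalize hd : a - ω⁻¹ * b = d at h2 ⊢
  field_simp

lemma bethe_aux_rat (ω a c : ℂ) (ha : a ≠ 0) (hc : c ≠ 0) (hA : a + ω * c ≠ 0) :
    (ω * c * a⁻¹ * (a + c)) / (c * a⁻¹ * (a + ω * c)) = ω * (a + c) / (a + ω * c) := by
  have hy : c * a⁻¹ * (a + ω * c) ≠ 0 :=
    mul_ne_zero (mul_ne_zero hc (inv_ne_zero ha)) hA
  rw [div_eq_div_iff hy hA]
  field_simp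

lemma bethe_fwd (N L J : ℕ) (m Pa Pb Pa' Pb' : ℤ)
    (ω : ℂ) (hω0 : ω ≠ 0) (hωN : ω ^ (N:ℤ) = 1)
    (hdvd : ((N:ℤ)) ∣ ((L:ℤ) + 2*(J:ℤ) + (Pa+Pb) + (Pa'+Pb')))
    (v : Fin J → ℂ) (hv : ∀ j, v j ≠ 0)
    (v' : Fin J → ℂ) (hv' : ∀ j, v' j = (v j)⁻¹ * ω ^ (-3 - 2 * m))
    (hden1 : ∀ i, v i + ω ^ (-2 - m) ≠ 0)
    (hden2 : ∀ i j, v i ≠ ω * v j)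
    (hden1' : ∀ i, v' i + ω ^ (-2 - m) ≠ 0)
    (hden2' : ∀ i j, v' i ≠ ω * v' j)
    (H : ∀ i, ((v i + ω ^ (-1 - m)) / (v i + ω ^ (-2 - m))) ^ L =
        -ω ^ (-(Pa + Pb)) * ∏ j, (v i - ω⁻¹ * v j) / (v i - ω * v j)) :
    (∀ i, ((v' i + ω ^ (-1 - m)) / (v' i + ω ^ (-2 - m))) ^ L =
        -ω ^ (-(Pa' + Pb')) * ∏ j, (v' i - ω⁻¹ * v' j) / (v' i - ω * v' j)) := by
  have key : ω ^ ((L:ℤ) + 2*(J:ℤ) + (Pa+Pb) + (Pa'+Pb')) = 1 := by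
    obtain ⟨q, hq⟩ := hdvd
    rw [hq, zpow_mul, hωN, one_zpow]
  set c : ℂ := ω ^ (-2 - m : ℤ) with hcdef
  have hc : c ≠ 0 := zpow_ne_zero _ hω0
  have hstep1 : ω ^ (-1 - m : ℤ) = ω * c := by
    rw [hcdef, show (-1 - m : ℤ) = 1 + (-2 - m) by ring, zpow_add₀ hω0, zpow_one]
  have hstep3 : ω ^ (-3 - 2*m : ℤ) = ω * c * c := by
    rw [show (-3 - 2*m : ℤ) = (-1 - m) + (-2 - m) by ring, zpow_add₀ hω0, hstep1]
  simp only [hstep1, hstep3] at H hv' hden1 hden1' ⊢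
  intro i
  have ha : v i ≠ 0 := hv i
  have hB : v i + c ≠ 0 := hden1 i
  -- numerator/denominator identities for the kinematic ratio
  have h1 : v' i + ω * c = ω * c * (v i)⁻¹ * (v i + c) := by
    rw [hv' i]; field_simp; ring
  have h2 : v' i + c = c * (v i)⁻¹ * (v i + ω * c) := by
    rw [hv' i]; field_simp; ring
  have hA : v i + ω * c ≠ 0 := by
    intro h
    exact hden1' i (by rw [h2, h, mul_zero])
  -- the second Bethe denominators
  have hd2 : ∀ j, v i - ω * v j ≠ 0 := fun j => sub_ne_zero.mpr (hden2 i j)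
  have hd2' : ∀ j, v i - ω⁻¹ * v j ≠ 0 := by
    intro j h
    apply sub_ne_zero.mpr (hden2' i j)
    rw [hv' i, hv' j, bethe_aux_den ω (v i) (v j) c hω0 (hv i) (hv j), h, mul_zero, neg_zero]
  -- rewrite the ratio
  have hrat : (v' i + ω * c) / (v' i + c) = ω * (v i + c) / (v i + ω * c) := by
    rw [h1, h2, bethe_aux_rat ω (v i) c ha hc hA]
  -- rewrite each product factor
  have hfac : ∀ j : Fin J, (v' i - ω⁻¹ * v' j) / (v' i - ω * v' j)
      = ω⁻¹ * ω⁻¹ * ((v i - ω * v j) / (v i - ω⁻¹ * v j)) := by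
    intro j
    rw [hv' i, hv' j]
    exact bethe_aux_fac ω (v i) (v j) c hω0 (hv i) (hv j) hc (hd2' j)
  rw [hrat, Finset.prod_congr rfl (fun j _ => hfac j), Finset.prod_mul_distrib,
    Finset.prod_const]
  -- Q and its value from the hypothesis
  set Q : ℂ := ∏ j, (v i - ω⁻¹ * v j) / (v i - ω * v j) with hQdef
  have hQ0 : Q ≠ 0 := by
    rw [hQdef]
    exact Finset.prod_ne_zero_iff.mpr (fun j _ => div_ne_zero (hd2' j) (hd2 j))
  have hprodinv : ∏ j, (v i - ω * v j) / (v i - ω⁻¹ * v j) = Q⁻¹ := by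
    rw [hQdef, ← Finset.prod_inv_distrib]
    exact Finset.prod_congr rfl (fun j _ => (inv_div _ _).symm)
  rw [hprodinv]
  have hQval : Q = -(ω ^ (Pa + Pb)) * (((v i + ω * c) / (v i + c)) ^ L) := by
    rw [H i, ← mul_assoc, neg_mul_neg, ← zpow_add₀ hω0,
      show (Pa + Pb) + -(Pa + Pb) = 0 from by ring, zpow_zero, one_mul]
  rw [hQval, Finset.card_univ, Fintype.card_fin]
  -- now pure ω–power algebra
  set T : ℂ := ((v i + ω * c) / (v i + c)) ^ L with hTdef
  have hT0 : T ≠ 0 := pow_ne_zero _ (div_ne_zero hA hB)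
  have hLHS : (ω * (v i + c) / (v i + ω * c)) ^ L = ω ^ (L:ℤ) * T⁻¹ := by
    rw [hTdef, ← inv_pow, zpow_natCast, ← mul_pow, inv_div, mul_div_assoc]
  have hJpow : (ω⁻¹ * ω⁻¹ : ℂ) ^ (J:ℕ) = ω ^ ((-2 : ℤ) * (J:ℤ)) := by
    rw [show (ω⁻¹ * ω⁻¹ : ℂ) = ω ^ (-2 : ℤ) by rw [zpow_neg, zpow_two, mul_inv]]
    rw [← zpow_natCast (ω ^ (-2:ℤ)) J, ← zpow_mul]
  have hS : ω ^ ((L:ℤ)) = ω ^ (-(Pa'+Pb') + (-2)*(J:ℤ) + (-(Pa+Pb))) := by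
    rw [show (L:ℤ) = (-(Pa'+Pb') + (-2)*(J:ℤ) + (-(Pa+Pb)))
        + ((L:ℤ) + 2*(J:ℤ) + (Pa+Pb) + (Pa'+Pb')) by ring, zpow_add₀ hω0, key, mul_one]
  rw [hLHS, hJpow, hS, mul_inv, inv_neg, ← zpow_neg, zpow_add₀ hω0, zpow_add₀ hω0]
  ring

/-- `{v_j}` satisfies the superintegrable Bethe equations for `(P_a,P_b)`
iff the reciprocal roots `{v'_j}` satisfy them for `(P'_a,P'_b)`, provided
`P_a+P_b+P'_a+P'_b ≡ -(L+2J) (mod N)`. -/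
theorem bethe_equation_reciprocal_equiv (N L J : ℕ) (hN : 2 ≤ N) (hL : 1 ≤ L)
    (m Pa Pb Pa' Pb' : ℤ)
    (ω : ℂ) (hω : ω = Complex.exp (2 * Real.pi * Complex.I / N))
    (hcong : Pa + Pb + Pa' + Pb' ≡ -((L : ℤ) + 2 * (J : ℤ)) [ZMOD (N : ℤ)])
    (v : Fin J → ℂ) (hv : ∀ j, v j ≠ 0)
    (v' : Fin J → ℂ) (hv' : ∀ j, v' j = (v j)⁻¹ * ω ^ (-3 - 2 * m))
    (hden1 : ∀ i, v i + ω ^ (-2 - m) ≠ 0)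
    (hden2 : ∀ i j, v i ≠ ω * v j)
    (hden1' : ∀ i, v' i + ω ^ (-2 - m) ≠ 0)
    (hden2' : ∀ i j, v' i ≠ ω * v' j) :
    ((∀ i, ((v i + ω ^ (-1 - m)) / (v i + ω ^ (-2 - m))) ^ L =
        -ω ^ (-(Pa + Pb)) * ∏ j, (v i - ω⁻¹ * v j) / (v i - ω * v j)) ↔
     (∀ i, ((v' i + ω ^ (-1 - m)) / (v' i + ω ^ (-2 - m))) ^ L =
        -ω ^ (-(Pa' + Pb')) * ∏ j, (v' i - ω⁻¹ * v' j) / (v' i - ω * v' j))) := by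
  have hω0 : ω ≠ 0 := by rw [hω]; exact Complex.exp_ne_zero _
  have hωN : ω ^ (N:ℤ) = 1 := by
    have hNne : (N:ℂ) ≠ 0 := Nat.cast_ne_zero.mpr (by omega)
    rw [hω, zpow_natCast, ← Complex.exp_nat_mul]
    rw [show (N:ℂ) * (2 * Real.pi * Complex.I / N) = 2 * Real.pi * Complex.I by field_simp]
    exact Complex.exp_two_pi_mul_I
  obtain ⟨q, hq⟩ := hcong.dvd
  have hz : ω ^ (-3 - 2*m : ℤ) ≠ 0 := zpow_ne_zero _ hω0
  have hv'0 : ∀ j, v' j ≠ 0 := by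
    intro j
    rw [hv' j]
    exact mul_ne_zero (inv_ne_zero (hv j)) hz
  have hv'' : ∀ j, v j = (v' j)⁻¹ * ω ^ (-3 - 2 * m) := by
    intro j
    rw [hv' j, mul_inv, inv_inv, mul_assoc, inv_mul_cancel₀ hz, mul_one]
  constructor
  · intro H
    exact bethe_fwd N L J m Pa Pb Pa' Pb' ω hω0 hωN
      ⟨-q, by linarith⟩ v hv v' hv' hden1 hden2 hden1' hden2' H
  · intro H
    exact bethe_fwd N L J m Pa' Pb' Pa Pb ω hω0 hωN
      ⟨-q, by linarith⟩ v' hv'0 v hv'' hden1' hden2' hden1 hden2 H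
end

section
/- Let N ≥ 2, ω = exp(2πi/N), L ≥ 1, J ≥ 0, and m, P_a, P_b, P'_a, P'_b integers with P_a + P_b + P'_a + P'_b ≡ −(L + 2J) (mod N). Let F(t) = ∏_{j=1}^{J}(1 + ω v_j t) and F'(t) = ∏_{j=1}^{J}(1 + ω v'_j t) with v'_j = v_j^{-1}ω^{-3-2m}. Define τ(t) = ω^{−P_a}(1 − ω^{−m}t)^L F(t)/F(ωt) + ω^{P_b}(1 − ω^{1−m}t)^L F(ω²t)/F(ωt), and τ'(t) the analogous expression with (P'_a, P'_b, F'). Then τ'(ω^m t) = ω^{P'_b + P_a + L + J} (−t)^L τ(ω^{m−1} t^{−1}) for all t where both sides are defined. -/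
/-- The superintegrable `τ^{(2)}`-eigenvalue function attached to data `(F, P_a, P_b)`. -/
noncomputable def tauFun (ω : ℂ) (L : ℕ) (m Pa Pb : ℤ) (F : ℂ → ℂ) (t : ℂ) : ℂ :=
  ω ^ (-Pa) * (1 - ω ^ (-m) * t) ^ L * F t / F (ω * t) +
    ω ^ Pb * (1 - ω ^ (1 - m) * t) ^ L * F (ω ^ (2 : ℤ) * t) / F (ω * t)

/-- `τ'(ω^m t) = ω^{P'_b+P_a+L+J} (−t)^L τ(ω^{m−1} t^{−1})`. -/
theorem tau_eigenvalue_reciprocal (N L J : ℕ) (hN : 2 ≤ N) (hL : 1 ≤ L)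
    (m Pa Pb Pa' Pb' : ℤ)
    (ω : ℂ) (hω : ω = Complex.exp (2 * Real.pi * Complex.I / N))
    (hcong : Pa + Pb + Pa' + Pb' ≡ -((L : ℤ) + 2 * (J : ℤ)) [ZMOD (N : ℤ)])
    (v : Fin J → ℂ) (hv : ∀ j, v j ≠ 0)
    (F F' : ℂ → ℂ)
    (hF : ∀ t : ℂ, F t = ∏ j, (1 + ω * v j * t))
    (hF' : ∀ t : ℂ, F' t = ∏ j, (1 + ω * ((v j)⁻¹ * ω ^ (-3 - 2 * m)) * t)) :
    ∀ t : ℂ, t ≠ 0 → F' (ω * (ω ^ m * t)) ≠ 0 → F (ω * (ω ^ (m - 1) * t⁻¹)) ≠ 0 →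
      tauFun ω L m Pa' Pb' F' (ω ^ m * t) =
        ω ^ (Pb' + Pa + (L : ℤ) + (J : ℤ)) * (-t) ^ L *
          tauFun ω L m Pa Pb F (ω ^ (m - 1) * t⁻¹) := by
  intro t ht hF'ne hFne
  have hω0 : ω ≠ 0 := by rw [hω]; exact Complex.exp_ne_zero _
  have hN0 : (N : ℂ) ≠ 0 := Nat.cast_ne_zero.mpr (by omega)
  have hW : ∀ a b : ℤ, ω ^ a * ω ^ b = ω ^ (a + b) := fun a b => (zpow_add₀ hω0 a b).symm
  have hωN : ω ^ (N : ℤ) = 1 := by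
    rw [zpow_natCast, hω, ← Complex.exp_nat_mul]
    have : (N : ℂ) * (2 * Real.pi * Complex.I / N) = 2 * Real.pi * Complex.I := by
      field_simp
    rw [this, Complex.exp_two_pi_mul_I]
  have hS : ∀ a : ℤ, ω ^ (a + (Pa + Pb + Pa' + Pb' + (L : ℤ) + 2 * (J : ℤ))) = ω ^ a := by
    intro a
    obtain ⟨d, hd⟩ : (N : ℤ) ∣ (Pa + Pb + Pa' + Pb' + (L : ℤ) + 2 * (J : ℤ)) := by
      have h := hcong.dvd
      have : -((L : ℤ) + 2 * (J : ℤ)) - (Pa + Pb + Pa' + Pb')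
          = -(Pa + Pb + Pa' + Pb' + (L : ℤ) + 2 * (J : ℤ)) := by ring
      rw [this] at h
      exact (dvd_neg.mp h)
    rw [zpow_add₀ hω0, hd, zpow_mul, hωN, one_zpow, mul_one]
  have hJp : ∀ a : ℤ, (ω ^ a) ^ J = ω ^ ((J : ℤ) * a) := by
    intro a; rw [mul_comm, zpow_mul, zpow_natCast]
  set P : ℂ := ∏ j, (v j)⁻¹ with hPdef
  have hP0 : P ≠ 0 := Finset.prod_ne_zero_iff.mpr fun j _ => inv_ne_zero (hv j)
  -- general product relation
  have eGen : ∀ (x y c : ℤ), 1 + (-3 - 2 * m) + x = c → c + 1 + y = 0 →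
      (∏ j, (1 + ω * ((v j)⁻¹ * ω ^ (-3 - 2 * m)) * (ω ^ x * t)))
        = P * ω ^ ((J : ℤ) * c) * t ^ J * ∏ j, (1 + ω * v j * (ω ^ y * t⁻¹)) := by
    intro x y c h1 h2
    have key : ∀ j : Fin J, 1 + ω * ((v j)⁻¹ * ω ^ (-3 - 2 * m)) * (ω ^ x * t)
        = (v j)⁻¹ * ω ^ c * t * (1 + ω * v j * (ω ^ y * t⁻¹)) := by
      intro j
      have hvj := hv j
      have l1 : 1 + ω * ((v j)⁻¹ * ω ^ (-3 - 2 * m)) * (ω ^ x * t)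
          = 1 + (v j)⁻¹ * (ω ^ (1 : ℤ) * ω ^ (-3 - 2 * m) * ω ^ x) * t := by
        rw [zpow_one]; ring
      have l2 : (v j)⁻¹ * ω ^ c * t * (1 + ω * v j * (ω ^ y * t⁻¹))
          = (v j)⁻¹ * ω ^ c * t
            + ((v j)⁻¹ * v j) * (t * t⁻¹) * (ω ^ c * ω ^ (1 : ℤ) * ω ^ y) := by
        rw [zpow_one]; ring
      rw [l1, l2, hW, hW, h1, inv_mul_cancel₀ hvj, mul_inv_cancel₀ ht, hW, hW, h2,
        zpow_zero]
      ring
    calc (∏ j, (1 + ω * ((v j)⁻¹ * ω ^ (-3 - 2 * m)) * (ω ^ x * t)))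
        = ∏ j, ((v j)⁻¹ * ω ^ c * t * (1 + ω * v j * (ω ^ y * t⁻¹))) :=
          Finset.prod_congr rfl fun j _ => key j
      _ = P * ω ^ ((J : ℤ) * c) * t ^ J * ∏ j, (1 + ω * v j * (ω ^ y * t⁻¹)) := by
          rw [← hJp]
          simp only [Finset.prod_mul_distrib, Finset.prod_const, Finset.card_univ,
            Fintype.card_fin]
          rfl
  -- argument normalizations
  have hmul1 : ∀ a b : ℤ, a + 1 = b → ω * ω ^ a = ω ^ b := by
    intro a b hab
    rw [← hab, zpow_add₀ hω0, zpow_one]; ring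
  have a1 : ω * (ω ^ m * t) = ω ^ (m + 1) * t := by
    rw [← mul_assoc, hmul1 m (m + 1) rfl]
  have a2 : ω ^ (2 : ℤ) * (ω ^ m * t) = ω ^ (m + 2) * t := by
    rw [← mul_assoc, hW]; ring_nf
  have b1 : ω * (ω ^ (m - 1) * t⁻¹) = ω ^ m * t⁻¹ := by
    rw [← mul_assoc, hmul1 (m - 1) m (by ring)]
  have b2 : ω ^ (2 : ℤ) * (ω ^ (m - 1) * t⁻¹) = ω ^ (m + 1) * t⁻¹ := by
    rw [← mul_assoc, hW]; ring_nf
  have e1 : F' (ω ^ m * t)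
      = P * ω ^ ((J : ℤ) * (-m - 2)) * t ^ J * F (ω ^ (2 : ℤ) * (ω ^ (m - 1) * t⁻¹)) := by
    rw [hF', hF]
    simp only [b2]
    exact eGen m (m + 1) (-m - 2) (by ring) (by ring)
  have e2 : F' (ω * (ω ^ m * t))
      = P * ω ^ ((J : ℤ) * (-m - 1)) * t ^ J * F (ω * (ω ^ (m - 1) * t⁻¹)) := by
    rw [hF', hF]
    simp only [a1, b1]
    exact eGen (m + 1) m (-m - 1) (by ring) (by ring)
  have e3 : F' (ω ^ (2 : ℤ) * (ω ^ m * t))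
      = P * ω ^ ((J : ℤ) * (-m)) * t ^ J * F (ω ^ (m - 1) * t⁻¹) := by
    rw [hF', hF]
    simp only [a2]
    exact eGen (m + 2) (m - 1) (-m) (by ring) (by ring)
  -- linear factor relations
  have p1 : 1 - ω ^ (-m) * (ω ^ m * t) = -t * (1 - ω ^ (1 - m) * (ω ^ (m - 1) * t⁻¹)) := by
    have k1 : ω ^ (-m) * (ω ^ m * t) = t := by
      rw [← mul_assoc, hW]; simp
    have k2 : ω ^ (1 - m) * (ω ^ (m - 1) * t⁻¹) = t⁻¹ := by
      rw [← mul_assoc, hW]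
      have : 1 - m + (m - 1) = 0 := by ring
      rw [this, zpow_zero, one_mul]
    rw [k1, k2]
    field_simp
    ring
  have p2 : 1 - ω ^ (1 - m) * (ω ^ m * t)
      = (ω * -t) * (1 - ω ^ (-m) * (ω ^ (m - 1) * t⁻¹)) := by
    have k1 : ω ^ (1 - m) * (ω ^ m * t) = ω * t := by
      rw [← mul_assoc, hW]
      have : 1 - m + m = 1 := by ring
      rw [this, zpow_one]
    have k2 : ω ^ (-m) * (ω ^ (m - 1) * t⁻¹) = ω⁻¹ * t⁻¹ := by
      rw [← mul_assoc, hW]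
      have : -m + (m - 1) = -1 := by ring
      rw [this, zpow_neg_one]
    rw [k1, k2]
    field_simp
    ring
  -- scalar coefficient identities
  have sc1 : ω ^ (-Pa') * ω ^ ((J : ℤ) * (-m - 2))
      = ω ^ (Pb' + Pa + (L : ℤ) + (J : ℤ)) * (ω ^ Pb * ω ^ ((J : ℤ) * (-m - 1))) := by
    rw [hW, hW, hW]
    rw [show Pb' + Pa + (L : ℤ) + (J : ℤ) + (Pb + (J : ℤ) * (-m - 1))
        = (-Pa' + (J : ℤ) * (-m - 2)) + (Pa + Pb + Pa' + Pb' + (L : ℤ) + 2 * (J : ℤ))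
      from by ring]
    exact (hS _).symm
  have sc2 : ω ^ Pb' * (ω ^ ((L : ℤ)) * ω ^ ((J : ℤ) * (-m)))
      = ω ^ (Pb' + Pa + (L : ℤ) + (J : ℤ)) * (ω ^ (-Pa) * ω ^ ((J : ℤ) * (-m - 1))) := by
    rw [hW, hW, hW, hW]
    congr 1
    ring
  have hD : F (ω * (ω ^ (m - 1) * t⁻¹)) ≠ 0 := hFne
  have hQ : P * ω ^ ((J : ℤ) * (-m - 1)) * t ^ J * F (ω * (ω ^ (m - 1) * t⁻¹)) ≠ 0 :=
    mul_ne_zero (mul_ne_zero (mul_ne_zero hP0 (zpow_ne_zero _ hω0)) (pow_ne_zero _ ht)) hD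
  simp only [tauFun]
  rw [e1, e2, e3, p1, p2, mul_pow, mul_pow, mul_pow, ← zpow_natCast ω L]
  rw [← add_div, mul_add]
  simp only [← mul_div_assoc]
  rw [← add_div, div_eq_div_iff hQ hD]
  linear_combination
    ((1 - ω ^ (1 - m) * (ω ^ (m - 1) * t⁻¹)) ^ L * (-t) ^ L
        * F (ω ^ (2 : ℤ) * (ω ^ (m - 1) * t⁻¹)) * t ^ J * P
        * F (ω * (ω ^ (m - 1) * t⁻¹))) * sc1
    + ((1 - ω ^ (-m) * (ω ^ (m - 1) * t⁻¹)) ^ L * (-t) ^ L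
        * F (ω ^ (m - 1) * t⁻¹) * t ^ J * P
        * F (ω * (ω ^ (m - 1) * t⁻¹))) * sc2
end
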